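/- arXiv:2405.15980 — 3 statements merged into one kernel-verified Lean document; each statement's English description precedes it below -/
import Mathlib

section
/- Let χ be a non-principal Dirichlet character modulo n. Then for every s ∈ ℂ with Re(s) < 0, the series K(1−s,χ) = ∑_{q≥1} τ(χ,q) q^{−(1−s)} converges absolutely and L(s,χ) = ε(χ) · π^{s−1/2} · n^{−s} · Γ_{e/o}(s;χ) · K(1−s,χ), where L(s,χ) is the analytic continuation of the Dirichlet L-function of χ. -/
open Complex Finset

/-- `Γ_e(s) = Γ((1-s)/2) / Γ(s/2)`. -/
noncomputable def GammaE (s : ℂ) : ℂ := Complex.Gamma ((1 - s) / 2) / Complex.Gamma (s / 2)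

/-- `Γ_o(s) = Γ((2-s)/2) / Γ((s+1)/2)`. -/
noncomputable def GammaO (s : ℂ) : ℂ := Complex.Gamma ((2 - s) / 2) / Complex.Gamma ((s + 1) / 2)

/-- The Gauss sum `τ(χ,q) = ∑_{j mod n} χ(j) e(jq/n)` of a Dirichlet character `χ` mod `n`. -/
noncomputable def tauSum {n : ℕ} (χ : DirichletCharacter ℂ n) (q : ℕ) : ℂ :=
  ∑ j ∈ Finset.range n, χ (j : ZMod n) *
    Complex.exp (2 * Real.pi * Complex.I * j * q / n)

private lemma LFunction_const_mul' {N : ℕ} [NeZero N] (c : ℂ) (Φ : ZMod N → ℂ) (s : ℂ) :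
    ZMod.LFunction (fun k => c * Φ k) s = c * ZMod.LFunction Φ s := by
  simp only [ZMod.LFunction, mul_assoc]
  rw [← Finset.mul_sum, mul_left_comm]

private lemma tauSum_eq_dft {n : ℕ} [NeZero n] (χ : DirichletCharacter ℂ n) (q : ℕ) :
    tauSum χ q = ZMod.dft (fun x : ZMod n => χ (-x)) (q : ZMod n) := by
  rw [ZMod.dft_apply]
  rw [show (∑ j : ZMod n, ZMod.stdAddChar (-(j * (q : ZMod n))) • χ (-j))
      = ∑ j : ZMod n, ZMod.stdAddChar (j * (q : ZMod n)) • χ j from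
    Fintype.sum_equiv (Equiv.neg _) _ _ (fun j => by
      simp only [Equiv.neg_apply, neg_mul, neg_neg])]
  rw [tauSum]
  refine Finset.sum_nbij' (fun j => (j : ZMod n)) (fun i => i.val) ?_ ?_ ?_ ?_ ?_
  · intro j hj; exact Finset.mem_univ _
  · intro i _; exact Finset.mem_range.mpr (ZMod.val_lt i)
  · intro j hj; exact ZMod.val_natCast_of_lt (Finset.mem_range.mp hj)
  · intro i _; exact ZMod.natCast_zmod_val i
  · intro j hj
    rw [smul_eq_mul, mul_comm]
    congr 1
    rw [show ((j : ZMod n) * (q : ZMod n)) = (((j * q : ℕ) : ℤ) : ZMod n) by push_cast; ring,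
      ZMod.stdAddChar_coe]
    congr 1
    push_cast
    ring

private lemma exp_add_even (s : ℂ) :
    Complex.exp ((Real.pi : ℂ) * I * s / 2) + Complex.exp (-(Real.pi : ℂ) * I * s / 2)
      = 2 * Complex.cos ((Real.pi : ℂ) * s / 2) := by
  rw [Complex.cos, show (Real.pi : ℂ) * s / 2 * I = (Real.pi : ℂ) * I * s / 2 by ring,
    show -((Real.pi : ℂ) * s / 2) * I = -(Real.pi : ℂ) * I * s / 2 by ring]
  ring

private lemma exp_sub_odd (s : ℂ) :
    Complex.exp (-(Real.pi : ℂ) * I * s / 2) - Complex.exp ((Real.pi : ℂ) * I * s / 2)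
      = -(2 * I * Complex.sin ((Real.pi : ℂ) * s / 2)) := by
  rw [Complex.sin, show (Real.pi : ℂ) * s / 2 * I = (Real.pi : ℂ) * I * s / 2 by ring,
    show -((Real.pi : ℂ) * s / 2) * I = -(Real.pi : ℂ) * I * s / 2 by ring]
  linear_combination (Complex.exp (-(Real.pi : ℂ) * I * s / 2)
    - Complex.exp ((Real.pi : ℂ) * I * s / 2)) * Complex.I_sq

private lemma even_aux {s : ℂ} (hs : s.re < 0) :
    2 * (2 * (Real.pi : ℂ)) ^ (-(1 - s)) * Complex.Gamma (1 - s)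
        * Complex.cos ((Real.pi : ℂ) * (1 - s) / 2)
      = (Real.pi : ℂ) ^ (s - 1 / 2) * GammaE s := by
  have h1 : ∀ m : ℕ, (1 : ℂ) - s ≠ -(2 * m + 1) := by
    intro m h
    apply_fun Complex.re at h
    simp at h
    have : (0 : ℝ) ≤ m := Nat.cast_nonneg m
    linarith
  have h2 := Complex.Gammaℝ_div_Gammaℝ_one_sub h1
  rw [show (1 : ℂ) - (1 - s) = s by ring, Complex.Gammaℂ_def] at h2
  rw [← h2, Complex.Gammaℝ_def, Complex.Gammaℝ_def, GammaE, mul_div_mul_comm,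
    ← Complex.cpow_sub _ _ (ofReal_ne_zero.mpr Real.pi_ne_zero),
    show -(1 - s) / 2 - -s / 2 = s - 1 / 2 by ring]

private lemma odd_aux {s : ℂ} (hs : s.re < 0) :
    2 * (2 * (Real.pi : ℂ)) ^ (-(1 - s)) * Complex.Gamma (1 - s)
        * Complex.sin ((Real.pi : ℂ) * (1 - s) / 2)
      = (Real.pi : ℂ) ^ (s - 1 / 2) * GammaO s := by
  have h1 : ∀ m : ℕ, (1 : ℂ) - s ≠ -(m : ℂ) := by
    intro m h
    apply_fun Complex.re at h
    simp at h
    have : (0 : ℝ) ≤ m := Nat.cast_nonneg m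
    linarith
  have h2 := Complex.inv_Gammaℝ_two_sub h1
  rw [show (2 : ℂ) - (1 - s) = 1 + s by ring, show (1 : ℂ) - s + 1 = 2 - s by ring,
    Complex.Gammaℂ_def] at h2
  have h3 : Complex.Gammaℝ (2 - s) ≠ 0 := by
    apply Complex.Gammaℝ_ne_zero_of_re_pos
    simp only [Complex.sub_re]
    norm_num
    linarith
  have h4 : 2 * (2 * (Real.pi : ℂ)) ^ (-(1 - s)) * Complex.Gamma (1 - s)
      * Complex.sin ((Real.pi : ℂ) * (1 - s) / 2)
      = Complex.Gammaℝ (2 - s) / Complex.Gammaℝ (1 + s) := by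
    rw [div_eq_mul_inv (Complex.Gammaℝ (2 - s)) (Complex.Gammaℝ (1 + s)), h2]
    field_simp
  rw [h4, Complex.Gammaℝ_def, Complex.Gammaℝ_def, GammaO, mul_div_mul_comm,
    ← Complex.cpow_sub _ _ (ofReal_ne_zero.mpr Real.pi_ne_zero),
    show -(2 - s) / 2 - -(1 + s) / 2 = s - 1 / 2 by ring,
    show (1 + s) / 2 = (s + 1) / 2 by ring]

/-- **Functional equation for Dirichlet `L`-functions in terms of Gauss sums.**
For any non-principal Dirichlet character `χ` mod `n` and any `s` with `Re s < 0`, the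
series `K(1-s,χ) = ∑_{q ≥ 1} τ(χ,q) q^{-(1-s)}` converges absolutely and
`L(s,χ) = ε(χ) π^{s-1/2} n^{-s} Γ_{e/o}(s;χ) K(1-s,χ)`, where `ε(χ) = 1` and
`Γ_{e/o}(s;χ) = Γ_e(s)` if `χ(-1) = 1`, while `ε(χ) = -i` and `Γ_{e/o}(s;χ) = Γ_o(s)`
if `χ(-1) = -1`. -/
theorem LFunction_eq_gaussSum_series
    (n : ℕ) [NeZero n] (χ : DirichletCharacter ℂ n) (hχ : χ ≠ 1)
    (s : ℂ) (hs : s.re < 0) :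
    Summable (fun q : ℕ => ‖tauSum χ q * (q : ℂ) ^ (s - 1)‖) ∧
    DirichletCharacter.LFunction χ s
      = (if χ (-1) = 1 then 1 else -Complex.I) * (Real.pi : ℂ) ^ (s - 1 / 2) / (n : ℂ) ^ s
          * (if χ (-1) = 1 then GammaE s else GammaO s)
          * ∑' q : ℕ, tauSum χ q * (q : ℂ) ^ (s - 1) := by
  have hn1 : n ≠ 1 := fun h => hχ (χ.level_one' h)
  have hs10 : s - 1 ≠ 0 := by
    intro h
    apply_fun Complex.re at h
    simp only [sub_re, one_re, zero_re] at h
    linarith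
  -- norm of exponential is 1
  have hexp : ∀ j q : ℕ, ‖Complex.exp (2 * Real.pi * Complex.I * j * q / n)‖ = 1 := by
    intro j q
    rw [show (2 * (Real.pi : ℂ) * Complex.I * j * q / n : ℂ)
        = ((2 * Real.pi * j * q / n : ℝ) : ℂ) * I by push_cast; ring]
    exact Complex.norm_exp_ofReal_mul_I _
  -- bound on the Gauss sum
  have htb : ∀ q : ℕ, ‖tauSum χ q‖ ≤ n := by
    intro q
    calc ‖tauSum χ q‖ ≤ ∑ j ∈ Finset.range n, ‖χ (j : ZMod n)
        * Complex.exp (2 * Real.pi * Complex.I * j * q / n)‖ := norm_sum_le _ _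
      _ ≤ ∑ j ∈ Finset.range n, 1 := by
          refine Finset.sum_le_sum fun j _ => ?_
          rw [norm_mul, hexp, mul_one]
          exact χ.norm_le_one _
      _ = n := by simp
  -- summability
  have hsummable : Summable (fun q : ℕ => ‖tauSum χ q * (q : ℂ) ^ (s - 1)‖) := by
    have hgs : Summable (fun q : ℕ => (n : ℝ) * (q : ℝ) ^ (s.re - 1)) :=
      (Real.summable_nat_rpow.mpr (by linarith)).mul_left _
    refine Summable.of_nonneg_of_le (fun q => norm_nonneg _) (fun q => ?_) hgs
    rcases Nat.eq_zero_or_pos q with rfl | hq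
    · simp [Complex.zero_cpow hs10, Real.zero_rpow (by intro h; linarith [h] : s.re - 1 ≠ 0)]
    · rw [norm_mul]
      have hcp : ‖(q : ℂ) ^ (s - 1)‖ = (q : ℝ) ^ (s.re - 1) := by
        rw [show ((q : ℂ)) = ((q : ℝ) : ℂ) by push_cast; rfl,
          Complex.norm_cpow_eq_rpow_re_of_pos (by exact_mod_cast hq)]
        simp
      rw [hcp]
      exact mul_le_mul_of_nonneg_right (htb q) (Real.rpow_nonneg (Nat.cast_nonneg _) _)
  refine ⟨hsummable, ?_⟩
  -- the tsum equals the ZMod L-function of the dft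
  have hs1 : 1 < (1 - s).re := by
    rw [sub_re, one_re]; linarith
  have hK : (∑' q : ℕ, tauSum χ q * (q : ℂ) ^ (s - 1))
      = ZMod.LFunction (ZMod.dft (fun x : ZMod n => χ (-x))) (1 - s) := by
    rw [ZMod.LFunction_eq_LSeries _ hs1, LSeries]
    refine tsum_congr fun q => ?_
    rcases Nat.eq_zero_or_pos q with rfl | hq
    · simp [LSeries.term_zero, Complex.zero_cpow hs10]
    · rw [LSeries.term_of_ne_zero (Nat.pos_iff_ne_zero.mp hq), tauSum_eq_dft,
        show s - 1 = -(1 - s) by ring, Complex.cpow_neg, div_eq_mul_inv]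
  -- relation between the two Fourier transforms
  have hneg : (ZMod.dft (fun x : ZMod n => χ (-x)))
      = fun k => χ (-1) * ZMod.dft (fun j : ZMod n => χ j) k := by
    rw [show (fun x : ZMod n => χ (-x)) = fun x : ZMod n => χ (-1) * χ x from
      funext fun x => by rw [← map_mul]; ring_nf]
    exact ZMod.dft_const_mul _ _
  have hsq : χ (-1) * χ (-1) = 1 := by
    rw [← map_mul, neg_mul_neg, one_mul, map_one]
  have hFχ : ZMod.LFunction (ZMod.dft (fun j : ZMod n => χ j)) (1 - s)
      = χ (-1) * ZMod.LFunction (ZMod.dft (fun x : ZMod n => χ (-x))) (1 - s) := by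
    rw [hneg, LFunction_const_mul', ← mul_assoc, hsq, one_mul]
  -- functional equation
  have harg : ∀ m : ℕ, (1 : ℂ) - s ≠ -(m : ℂ) := by
    intro m h
    apply_fun Complex.re at h
    simp at h
    have : (0 : ℝ) ≤ m := Nat.cast_nonneg m
    linarith
  have key := ZMod.LFunction_one_sub (fun j : ZMod n => χ j) harg
    (Or.inl (χ.map_zero' hn1))
  rw [sub_sub_cancel] at key
  have hL : DirichletCharacter.LFunction χ s
      = ZMod.LFunction (fun j : ZMod n => χ j) s := rfl
  rw [hL, key, hFχ, ← hK]
  rw [show (1 : ℂ) - s - 1 = -s by ring, Complex.cpow_neg]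
  set K := ∑' q : ℕ, tauSum χ q * (q : ℂ) ^ (s - 1) with hKdef
  rcases χ.even_or_odd with he | ho
  · have he' : χ (-1) = 1 := he
    rw [he', if_pos rfl, if_pos rfl]
    have h1 := exp_add_even (1 - s)
    have h2 := even_aux hs
    linear_combination (((n : ℂ) ^ s)⁻¹ * K) * h2
      + (((n : ℂ) ^ s)⁻¹ * (2 * (Real.pi : ℂ)) ^ (-(1 - s)) * Complex.Gamma (1 - s) * K) * h1
  · have ho' : χ (-1) = -1 := ho
    have hne : ¬ (χ (-1) = 1) := by
      rw [ho']; intro h; exact two_ne_zero (by linear_combination -h : (2 : ℂ) = 0)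
    rw [ho', if_neg (by norm_num : ¬((-1 : ℂ) = 1)), if_neg (by norm_num : ¬((-1 : ℂ) = 1))]
    have h1 := exp_sub_odd (1 - s)
    have h2 := odd_aux hs
    linear_combination (((n : ℂ) ^ s)⁻¹ * (2 * (Real.pi : ℂ)) ^ (-(1 - s))
        * Complex.Gamma (1 - s) * K) * h1
      + (-Complex.I * ((n : ℂ) ^ s)⁻¹ * K) * h2
end

section
/- Let l>0 be an odd square-free integer. For all s,w ∈ ℂ with Re(s) > 1 and Re(w) > 1, the double series ∑_{d,m ≥ 1, d and m odd} χ^{(8d)}(ml) m^{−w} d^{−s} converges absolutely and ∑_{d≥1, d odd} L(w, χ^{(8d)}) χ^{(8d)}(l) d^{−s} = ∑_{m≥1, m odd} χ^{(8)}(ml) L^{(2)}(s, χ_{ml}) m^{−w}, where both outer series converge absolutely. -/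
open Complex Finset

/-- `L^{(2)}(s, χ_n) = ∑_{k ≥ 1, k odd} (k/n) k^{-s}`: the `L`-function of the Jacobi
symbol `χ_n = (·/n)` with the Euler factor at `2` removed. -/
noncomputable def L2Jacobi (s : ℂ) (n : ℕ) : ℂ :=
  ∑' k : ℕ, if Odd k then (jacobiSym (k : ℤ) n : ℂ) * (k : ℂ) ^ (-s) else 0

private lemma jacNormLe (a : ℤ) (b : ℕ) : ‖((jacobiSym a b : ℤ) : ℂ)‖ ≤ 1 := by
  rcases jacobiSym.trichotomy a b with h | h | h <;> simp [h]

private lemma jacEvenZero {a : ℤ} {b : ℕ} (ha : (2 : ℤ) ∣ a) (hb : Even b) (hb0 : b ≠ 0) :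
    jacobiSym a b = 0 := by
  refine jacobiSym.eq_zero_iff.mpr ⟨hb0, fun hg => ?_⟩
  have h2 : (2 : ℤ) ∣ (Int.gcd a b : ℤ) :=
    Int.dvd_coe_gcd ha (by exact_mod_cast hb.two_dvd)
  rw [hg] at h2
  norm_num at h2

set_option maxHeartbeats 2000000 in
/-- **The double Dirichlet series `A(s,w;l)`.**
Let `l > 0` be odd and squarefree and let `χ d` be the Kronecker symbol character
`χ^{(8d)} = (8d/·)` modulo `8d` (hypothesis `hχ`).  For `Re s > 1` and `Re w > 1` the
double series `∑_{d,m odd} χ^{(8d)}(ml) m^{-w} d^{-s}` converges absolutely and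
`∑_{d odd} L(w,χ^{(8d)}) χ^{(8d)}(l) d^{-s} = ∑_{m odd} χ^{(8)}(ml) L^{(2)}(s,χ_{ml}) m^{-w}`,
both outer series converging absolutely. -/
theorem doubleDirichletSeries_eq
    (χ : (d : ℕ) → DirichletCharacter ℂ (8 * d))
    (hχ : ∀ d : ℕ, Odd d → ∀ n : ℕ, χ d (n : ZMod (8 * d)) = (jacobiSym (8 * d) n : ℂ))
    (l : ℕ) (hl_odd : Odd l) (hl_sqf : Squarefree l)
    (s w : ℂ) (hs : 1 < s.re) (hw : 1 < w.re) :
    Summable (fun p : ℕ × ℕ =>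
      ‖if Odd p.1 ∧ Odd p.2 then
          (jacobiSym (8 * p.1) (p.2 * l) : ℂ) * (p.2 : ℂ) ^ (-w) * (p.1 : ℂ) ^ (-s)
        else 0‖)
    ∧ Summable (fun d : ℕ =>
        ‖if h : Odd d then
            (@DirichletCharacter.LFunction (8 * d)
                ⟨by rcases h with ⟨k, rfl⟩; omega⟩ (χ d) w)
              * (jacobiSym (8 * d) l : ℂ) * (d : ℂ) ^ (-s)
          else 0‖)
    ∧ Summable (fun m : ℕ =>
        ‖if Odd m then (jacobiSym 8 (m * l) : ℂ) * L2Jacobi s (m * l) * (m : ℂ) ^ (-w)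
          else 0‖)
    ∧ (∑' d : ℕ, if h : Odd d then
          (@DirichletCharacter.LFunction (8 * d)
              ⟨by rcases h with ⟨k, rfl⟩; omega⟩ (χ d) w)
            * (jacobiSym (8 * d) l : ℂ) * (d : ℂ) ^ (-s)
        else 0)
      = ∑' m : ℕ, if Odd m then
          (jacobiSym 8 (m * l) : ℂ) * L2Jacobi s (m * l) * (m : ℂ) ^ (-w)
        else 0 := by
  have hl0 : l ≠ 0 := by rcases hl_odd with ⟨k, rfl⟩; omega
  set F : ℕ × ℕ → ℂ := fun p =>
    if Odd p.1 ∧ Odd p.2 then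
      (jacobiSym (8 * p.1) (p.2 * l) : ℂ) * (p.2 : ℂ) ^ (-w) * (p.1 : ℂ) ^ (-s)
    else 0 with hFdef
  -- summability of the double series
  have hS : Summable fun d : ℕ => (d : ℝ) ^ (-s.re) :=
    Real.summable_nat_rpow.mpr (by linarith)
  have hW : Summable fun m : ℕ => (m : ℝ) ^ (-w.re) :=
    Real.summable_nat_rpow.mpr (by linarith)
  have hnormle : ∀ p : ℕ × ℕ, ‖F p‖ ≤ (p.1 : ℝ) ^ (-s.re) * (p.2 : ℝ) ^ (-w.re) := by
    rintro ⟨d, m⟩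
    by_cases h : Odd d ∧ Odd m
    · have hd : 0 < d := h.1.pos
      have hm : 0 < m := h.2.pos
      simp only [hFdef, if_pos h]
      rw [norm_mul, norm_mul, norm_natCast_cpow_of_pos hd, norm_natCast_cpow_of_pos hm]
      have := jacNormLe (8 * (d : ℤ)) (m * l)
      calc ‖((jacobiSym (8 * (d : ℤ)) (m * l) : ℤ) : ℂ)‖ * (m : ℝ) ^ (-w.re)
            * (d : ℝ) ^ (-s.re)
          ≤ 1 * (m : ℝ) ^ (-w.re) * (d : ℝ) ^ (-s.re) := by
            gcongr
        _ = (d : ℝ) ^ (-s.re) * (m : ℝ) ^ (-w.re) := by ring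
    · simp only [hFdef, if_neg h, norm_zero]
      positivity
  have hFnorm : Summable fun p : ℕ × ℕ => ‖F p‖ :=
    Summable.of_nonneg_of_le (fun p => norm_nonneg _) hnormle
      (hS.mul_of_nonneg hW (fun d => by positivity) (fun m => by positivity))
  have hFsum : Summable F := hFnorm.of_norm
  -- the left-hand side termwise identity
  have hG : ∀ d : ℕ,
      (if h : Odd d then
          (@DirichletCharacter.LFunction (8 * d)
              ⟨by rcases h with ⟨k, rfl⟩; omega⟩ (χ d) w)
            * (jacobiSym (8 * d) l : ℂ) * (d : ℂ) ^ (-s)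
        else 0) = ∑' m : ℕ, F (d, m) := by
    intro d
    by_cases hd : Odd d
    · rw [dif_pos hd]
      haveI : NeZero (8 * d) := ⟨by rcases hd with ⟨k, rfl⟩; omega⟩
      rw [DirichletCharacter.LFunction_eq_LSeries _ hw]
      simp only [LSeries]
      rw [← tsum_mul_right, ← tsum_mul_right]
      refine tsum_congr fun m => ?_
      rcases eq_or_ne m 0 with rfl | hm0
      · simp [hFdef, Nat.odd_iff]
      rw [LSeries.term_of_ne_zero hm0]
      by_cases hm : Odd m
      · have hχm := hχ d hd m
        rw [hχm]
        simp only [hFdef]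
        rw [if_pos (⟨hd, hm⟩ : Odd d ∧ Odd m), jacobiSym.mul_right' _ hm0 hl0,
          Int.cast_mul]
        simp only [cpow_neg, div_eq_mul_inv]
        ring
      · have hz : jacobiSym (8 * (d : ℤ)) m = 0 :=
          jacEvenZero (a := 8 * (d : ℤ)) ⟨4 * d, by ring⟩ (Nat.not_odd_iff_even.mp hm) hm0
        rw [hχ d hd m, hz]
        simp [hFdef, hm]
    · rw [dif_neg hd]
      have h0 : ∀ m : ℕ, F (d, m) = 0 := fun m => by simp [hFdef, hd]
      rw [tsum_congr h0, tsum_zero]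
  -- the right-hand side termwise identity
  have hH : ∀ m : ℕ,
      (if Odd m then (jacobiSym 8 (m * l) : ℂ) * L2Jacobi s (m * l) * (m : ℂ) ^ (-w)
        else 0) = ∑' d : ℕ, F (d, m) := by
    intro m
    by_cases hm : Odd m
    · rw [if_pos hm, L2Jacobi, ← tsum_mul_left, ← tsum_mul_right]
      refine tsum_congr fun k => ?_
      by_cases hk : Odd k
      · simp only [hFdef]
        rw [if_pos hk, if_pos (⟨hk, hm⟩ : Odd k ∧ Odd m), jacobiSym.mul_left, Int.cast_mul]
        ring
      · simp only [hFdef]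
        rw [if_neg hk, if_neg (by tauto : ¬ (Odd k ∧ Odd m))]
        ring
    · rw [if_neg hm]
      have h0 : ∀ d : ℕ, F (d, m) = 0 := fun d => by simp [hFdef, hm]
      rw [tsum_congr h0, tsum_zero]
  refine ⟨hFnorm, ?_, ?_, ?_⟩
  · refine Summable.of_nonneg_of_le (fun d => norm_nonneg _) (fun d => ?_) hFnorm.prod
    rw [hG d]
    exact norm_tsum_le_tsum_norm (hFnorm.prod_factor d)
  · refine Summable.of_nonneg_of_le (fun m => norm_nonneg _) (fun m => ?_)
      hFnorm.prod_symm.prod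
    rw [hH m]
    exact norm_tsum_le_tsum_norm (hFnorm.prod_symm.prod_factor m)
  · calc (∑' d : ℕ, if h : Odd d then
          (@DirichletCharacter.LFunction (8 * d)
              ⟨by rcases h with ⟨k, rfl⟩; omega⟩ (χ d) w)
            * (jacobiSym (8 * d) l : ℂ) * (d : ℂ) ^ (-s)
        else 0)
        = ∑' (d : ℕ) (m : ℕ), F (d, m) := tsum_congr hG
      _ = ∑' (m : ℕ) (d : ℕ), F (d, m) := by
            have hFsum' : Summable (Function.uncurry fun (d m : ℕ) => F (d, m)) := hFsum
            exact (Summable.tsum_comm hFsum').symm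
      _ = _ := (tsum_congr hH).symm
end

section
/- Let l>0 be an odd square-free integer. For all s,w ∈ ℂ with Re(s) > 1 and Re(w) > 1/2, one has ∑_{m≥1, m odd, ml a perfect square} χ^{(8)}(ml) L^{(2)}(s, χ_{ml}) m^{−w} = ζ^{(2)}(2w) · L^{(2)}(s, χ_{l²}) / ( l^{w} · L^{(2)}(2w+s, χ_{l²}) ), where the series on the left converges absolutely. -/
open Complex Finset

/-- `ζ^{(c)}(s)`: the Riemann zeta function with the Euler factors at primes dividing `c`
removed. -/
noncomputable def zetaE (c : ℕ) (s : ℂ) : ℂ :=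
  riemannZeta s * ∏ p ∈ c.primeFactors, (1 - (p : ℂ) ^ (-s))

open scoped LSeries.notation
open scoped ArithmeticFunction.Moebius

namespace SquareTermsAux

open LSeries ArithmeticFunction

/-- Indicator function of coprimality to `N`. -/
noncomputable def eF (N : ℕ) : ℕ → ℂ := fun n => if n.Coprime N then 1 else 0

/-- `n ↦ n ^ (-2w)`. -/
noncomputable def XF (w : ℂ) : ℕ → ℂ := fun n => (n : ℂ) ^ (-(2 * w))

/-- The restricted zeta sum `T(z, N) = ∑_{(n,N)=1} n^{-z}`. -/
noncomputable def TT (z : ℂ) (N : ℕ) : ℂ :=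
  ∑' n : ℕ, (if n.Coprime N then 1 else 0) * (n : ℂ) ^ (-z)

lemma eF_mul (N m n : ℕ) : eF N (m * n) = eF N m * eF N n := by
  simp only [eF, Nat.coprime_mul_iff_left]
  split_ifs <;> simp_all

lemma eF_one (N : ℕ) : eF N 1 = 1 := by simp [eF, Nat.coprime_one_left]

lemma XF_mul (w : ℂ) (m n : ℕ) : XF w (m * n) = XF w m * XF w n := by
  simp only [XF, Nat.cast_mul]
  exact natCast_mul_natCast_cpow m n _

lemma XF_one (w : ℂ) : XF w 1 = 1 := by simp [XF]

lemma norm_eF_le (N n : ℕ) : ‖eF N n‖ ≤ 1 := by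
  simp only [eF]; split <;> simp

lemma norm_XF_le (w : ℂ) (hw : 0 ≤ w.re) (n : ℕ) : ‖XF w n‖ ≤ 1 := by
  rcases Nat.eq_zero_or_pos n with rfl | hn
  · simp only [XF, Nat.cast_zero]
    by_cases h : (-(2 * w)) = 0
    · rw [h, cpow_zero]; simp
    · rw [zero_cpow h]; simp
  · rw [XF, norm_natCast_cpow_of_pos hn]
    apply Real.rpow_le_one_of_one_le_of_nonpos
    · exact_mod_cast hn
    · simp only [neg_re, mul_re]
      norm_num
      linarith

/-- Twisting by a completely multiplicative function distributes over convolution. -/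
lemma mul_convolution_distrib (χ f g : ℕ → ℂ) (hχ : ∀ m n, χ (m * n) = χ m * χ n) :
    (χ * f) ⍟ (χ * g) = χ * (f ⍟ g) := by
  ext n
  simp only [Pi.mul_apply, LSeries.convolution_def, Finset.mul_sum]
  refine Finset.sum_congr rfl fun p hp => ?_
  rw [(Nat.mem_divisorsAntidiagonal.mp hp).1.symm, hχ]
  ring

/-- `χ ⍟ (χ·μ) = δ` for `χ` completely multiplicative. -/
lemma convolution_mul_moebius (χ : ℕ → ℂ) (hχ : ∀ m n, χ (m * n) = χ m * χ n)
    (h1 : χ 1 = 1) : χ ⍟ (χ * ↗μ) = δ := by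
  have h : (1 : ℕ → ℂ) ⍟ ↗μ = δ := by
    rw [LSeries.one_convolution_eq_zeta_convolution, ← ArithmeticFunction.one_eq_delta]
    simp_rw [← natCoe_apply, ← intCoe_apply, ArithmeticFunction.coe_mul,
      coe_zeta_mul_coe_moebius]
  nth_rewrite 1 [← mul_one χ]
  rw [mul_convolution_distrib χ 1 ↗μ hχ, h]
  exact LSeries.mul_delta h1

lemma summable_norm_cpow {z : ℂ} (hz : 1 < z.re) :
    Summable (fun n : ℕ => ‖(n : ℂ) ^ (-z)‖) := by
  have hz0 : -z ≠ 0 := by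
    intro h
    rw [neg_eq_zero] at h
    rw [h] at hz
    simp only [Complex.zero_re] at hz
    linarith
  have hmaj : Summable (fun n : ℕ => (n : ℝ) ^ (-z.re)) :=
    Real.summable_nat_rpow.mpr (by linarith)
  refine hmaj.of_nonneg_of_le (fun n => norm_nonneg _) (fun n => ?_)
  rcases Nat.eq_zero_or_pos n with rfl | hn
  · rw [Nat.cast_zero, zero_cpow hz0, norm_zero]
    positivity
  · rw [norm_natCast_cpow_of_pos hn, neg_re]

lemma norm_TT_le (z : ℂ) (N : ℕ) (hz : 1 < z.re) :
    ‖TT z N‖ ≤ ∑' n : ℕ, ‖(n : ℂ) ^ (-z)‖ := by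
  have hb : ∀ n : ℕ, ‖(if n.Coprime N then (1 : ℂ) else 0) * (n : ℂ) ^ (-z)‖
      ≤ ‖(n : ℂ) ^ (-z)‖ := by
    intro n
    rw [norm_mul]
    have : ‖(if n.Coprime N then (1 : ℂ) else 0)‖ ≤ 1 := by split <;> simp
    calc ‖(if n.Coprime N then (1:ℂ) else 0)‖ * ‖(n : ℂ) ^ (-z)‖
        ≤ 1 * ‖(n : ℂ) ^ (-z)‖ := by
          exact mul_le_mul_of_nonneg_right this (norm_nonneg _)
      _ = ‖(n : ℂ) ^ (-z)‖ := one_mul _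
  have hsumm : Summable (fun n : ℕ =>
      ‖(if n.Coprime N then (1 : ℂ) else 0) * (n : ℂ) ^ (-z)‖) :=
    (summable_norm_cpow hz).of_nonneg_of_le (fun n => norm_nonneg _) hb
  exact (norm_tsum_le_tsum_norm hsumm).trans
    (Summable.tsum_le_tsum hb hsumm (summable_norm_cpow hz))

/-- `TT` as an `LSeries`. -/
lemma TT_eq_LSeries (z : ℂ) (N : ℕ) (hN : N ≠ 1) : TT z N = LSeries (eF N) z := by
  refine tsum_congr fun n => ?_
  rcases Nat.eq_zero_or_pos n with rfl | hn
  · rw [LSeries.term_zero]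
    have : ¬ Nat.Coprime 0 N := by simpa [Nat.coprime_zero_left] using hN
    simp [this]
  · rw [LSeries.term_of_ne_zero hn.ne', eF, cpow_neg, div_eq_mul_inv]

/-- `L^{(2)}(z, χ_{n²}) = T(z, 2n)` for odd `n`. -/
lemma L2Jacobi_sq (z : ℂ) (n : ℕ) (hn : Odd n) : L2Jacobi z (n ^ 2) = TT z (2 * n) := by
  have hn0 : n ≠ 0 := by rintro rfl; simp at hn
  haveI : NeZero n := ⟨hn0⟩
  refine tsum_congr fun k => ?_
  by_cases hk : Odd k
  · rw [if_pos hk]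
    have hk2 : k.Coprime 2 := Nat.coprime_two_right.mpr hk
    congr 1
    rw [sq, jacobiSym.mul_right' _ hn0 hn0]
    by_cases hc : k.Coprime n
    · have hg : Int.gcd (k : ℤ) (n : ℤ) = 1 := by
        rwa [Int.gcd_natCast_natCast]
      have : jacobiSym (k : ℤ) n * jacobiSym (k : ℤ) n = 1 := by
        rw [← sq]; exact jacobiSym.sq_one hg
      rw [this, if_pos (Nat.coprime_mul_iff_right.mpr ⟨hk2, hc⟩)]
      simp
    · have hg : Int.gcd (k : ℤ) (n : ℤ) ≠ 1 := by
        rwa [Int.gcd_natCast_natCast]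
      rw [jacobiSym.eq_zero_iff_not_coprime.mpr hg]
      rw [if_neg (fun h => hc (Nat.coprime_mul_iff_right.mp h).2)]
      simp
  · rw [if_neg hk]
    have : ¬ k.Coprime (2 * n) := fun h =>
      hk (Nat.coprime_two_right.mp (Nat.coprime_mul_iff_right.mp h).1)
    simp [this]

/-- `ζ^{(2)}(z) = T(z, 2)` for `Re z > 1`. -/
lemma zetaE_two_eq_TT (z : ℂ) (hz : 1 < z.re) : zetaE 2 z = TT z 2 := by
  have hz0 : z ≠ 0 := by
    intro h
    rw [h] at hz
    simp only [Complex.zero_re] at hz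
    linarith
  have hf : Summable (fun n : ℕ => (n : ℂ) ^ (-z)) := (summable_norm_cpow hz).of_norm
  have hzeta : riemannZeta z = ∑' n : ℕ, (n : ℂ) ^ (-z) := by
    rw [zeta_eq_tsum_one_div_nat_cpow hz]
    exact tsum_congr fun n => by rw [cpow_neg, one_div]
  have hgsum : Summable (fun n : ℕ => if Even n then (n : ℂ) ^ (-z) else 0) := by
    refine Summable.of_norm (Summable.of_nonneg_of_le (fun n => norm_nonneg _)
      (fun n => ?_) (summable_norm_cpow hz))
    split <;> simp [norm_nonneg]
  have heven : ∑' n : ℕ, (if Even n then (n : ℂ) ^ (-z) else 0)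
      = (2 : ℂ) ^ (-z) * ∑' n : ℕ, (n : ℂ) ^ (-z) := by
    have hinj : Function.Injective (fun k : ℕ => 2 * k) := mul_right_injective₀ two_ne_zero
    rw [← Function.Injective.tsum_eq hinj (f := fun n =>
        if Even n then (n : ℂ) ^ (-z) else 0) ?_]
    · rw [← tsum_mul_left]
      refine tsum_congr fun k => ?_
      have : Even (2 * k) := even_two_mul k
      rw [if_pos this]
      push_cast
      exact natCast_mul_natCast_cpow 2 k (-z)
    · intro x hx
      rcases Nat.even_or_odd x with he | ho
      · obtain ⟨r, hr⟩ := he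
        exact ⟨r, by simp only []; omega⟩
      · exfalso
        apply hx
        simp [Nat.not_even_iff_odd.mpr ho]
  have hodd : TT z 2 = ∑' n : ℕ, ((n : ℂ) ^ (-z) - if Even n then (n : ℂ) ^ (-z) else 0) := by
    refine tsum_congr fun n => ?_
    by_cases h : Odd n
    · rw [if_pos (Nat.coprime_two_right.mpr h), if_neg (Nat.not_even_iff_odd.mpr h),
        one_mul, sub_zero]
    · rw [if_neg (fun hc => h (Nat.coprime_two_right.mp hc)),
        if_pos (Nat.not_odd_iff_even.mp h), zero_mul, sub_self]
  rw [zetaE, hodd, Summable.tsum_sub hf hgsum, heven, ← hzeta]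
  have h2 : Nat.primeFactors 2 = {2} := Nat.Prime.primeFactors Nat.prime_two
  rw [h2, Finset.prod_singleton]
  push_cast
  ring

/-- Möbius sum over common divisors detects coprimality. -/
lemma moebius_divisor_sum (j k : ℕ) (hj : j ≠ 0) :
    ∑ d ∈ j.divisors, (if d ∣ k then (μ d : ℂ) else 0)
      = if j.Coprime k then 1 else 0 := by
  have hg0 : Nat.gcd j k ≠ 0 := fun h => hj (Nat.eq_zero_of_gcd_eq_zero_left h)
  have hfilter : (j.divisors.filter (· ∣ k)) = (Nat.gcd j k).divisors := by
    ext d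
    simp only [Finset.mem_filter, Nat.mem_divisors, Nat.dvd_gcd_iff, hj, hg0,
      ne_eq, not_false_eq_true, and_true]
  have hstep : ∑ d ∈ j.divisors, (if d ∣ k then (μ d : ℂ) else 0)
      = ∑ d ∈ (Nat.gcd j k).divisors, (μ d : ℂ) := by
    rw [← hfilter, Finset.sum_filter]
  rw [hstep]
  have hmz : ∑ d ∈ (Nat.gcd j k).divisors, μ d
      = if Nat.gcd j k = 1 then 1 else 0 := by
    have h := congrArg (fun f : ArithmeticFunction ℤ => f (Nat.gcd j k))
      ArithmeticFunction.moebius_mul_coe_zeta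
    simp only [ArithmeticFunction.coe_mul_zeta_apply, ArithmeticFunction.one_apply] at h
    exact h
  have : ∑ d ∈ (Nat.gcd j k).divisors, (μ d : ℂ)
      = ((∑ d ∈ (Nat.gcd j k).divisors, μ d : ℤ) : ℂ) := by push_cast; rfl
  rw [this, hmz]
  unfold Nat.Coprime
  split <;> simp


lemma LSummable_bounded {s : ℂ} (hs : 1 < s.re) (f : ℕ → ℂ)
    (hf : ∀ n, ‖f n‖ ≤ 1) : LSeriesSummable f s :=
  LSeriesSummable_of_bounded_of_one_lt_re (m := 1) (fun n _ => hf n) hs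

lemma norm_mu_le (n : ℕ) : ‖((μ n : ℤ) : ℂ)‖ ≤ 1 := by
  rw [Complex.norm_intCast]
  exact_mod_cast ArithmeticFunction.abs_moebius_le_one

lemma LSummable_A {s w : ℂ} (hs : 1 < s.re) (hw : 0 ≤ w.re) (N : ℕ) :
    LSeriesSummable (eF N * XF w * ↗μ) s := by
  refine LSummable_bounded hs _ (fun n => ?_)
  simp only [Pi.mul_apply, norm_mul]
  exact mul_le_one₀ (mul_le_one₀ (norm_eF_le N n) (norm_nonneg _) (norm_XF_le w hw n))
    (norm_nonneg _) (norm_mu_le n)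

lemma LSummable_B {s : ℂ} (hs : 1 < s.re) (N : ℕ) : LSeriesSummable (eF N) s :=
  LSummable_bounded hs _ (norm_eF_le N)

lemma LSummable_g {s w : ℂ} (hs : 1 < s.re) (hw : 0 ≤ w.re) (N : ℕ) :
    LSeriesSummable (eF N * XF w) s := by
  refine LSummable_bounded hs _ (fun n => ?_)
  simp only [Pi.mul_apply, norm_mul]
  exact mul_le_one₀ (norm_eF_le N n) (norm_nonneg _) (norm_XF_le w hw n)

lemma LSeries_inverse {s w : ℂ} (hs : 1 < s.re) (hw : 0 ≤ w.re) (N : ℕ) :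
    LSeries (eF N * XF w) s * LSeries (eF N * XF w * ↗μ) s = 1 := by
  rw [← LSeries_convolution' (LSummable_g hs hw N) (LSummable_A hs hw N)]
  have hχ : ∀ m n, (eF N * XF w) (m * n) = (eF N * XF w) m * (eF N * XF w) n := by
    intro m n
    simp only [Pi.mul_apply, eF_mul, XF_mul]
    ring
  have h1 : (eF N * XF w) 1 = 1 := by
    simp only [Pi.mul_apply, eF_one, XF_one, mul_one]
  rw [convolution_mul_moebius _ hχ h1, LSeries_delta, Pi.one_apply]

set_option maxHeartbeats 1000000 in
lemma key_sum (l : ℕ) (hl : Odd l) (hl0 : l ≠ 0) {s w : ℂ} (hs : 1 < s.re)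
    (hw : 1 / 2 < w.re) :
    ∑' k : ℕ, (if Odd k then XF w k * TT s (2 * (l * k)) else 0)
      = TT (2 * w) 2 * LSeries ((eF (2 * l) * XF w * ↗μ) ⍟ eF (2 * l)) s := by
  have h2w : 1 < (2 * w).re := by
    simp only [Complex.mul_re, Complex.re_ofNat, Complex.im_ofNat, zero_mul, sub_zero]
    linarith
  have hs0 : -s ≠ 0 := by
    intro h; rw [neg_eq_zero] at h; rw [h] at hs
    simp only [Complex.zero_re] at hs; linarith
  have h2w0 : -(2 * w) ≠ 0 := by
    intro h; rw [neg_eq_zero] at h; rw [h] at h2w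
    simp only [Complex.zero_re] at h2w; linarith
  have hu := summable_norm_cpow h2w
  have hv := summable_norm_cpow hs
  set α : ℕ → ℂ := fun k => if Odd k then XF w k else 0 with hα
  have hα_norm : ∀ k, ‖α k‖ ≤ ‖(k : ℂ) ^ (-(2 * w))‖ := by
    intro k
    by_cases hk : Odd k
    · simp only [hα, if_pos hk, XF]
      exact le_rfl
    · simp only [hα, if_neg hk, norm_zero]
      exact norm_nonneg _
  set P : ℕ × ℕ → ℂ := fun p =>
    α p.1 * ((if (p.2).Coprime (2 * l * p.1) then 1 else 0) * (p.2 : ℂ) ^ (-s)) with hPdef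
  have hP : Summable P := by
    refine Summable.of_norm_bounded
      (hu.mul_of_nonneg hv (fun n => norm_nonneg _) (fun n => norm_nonneg _))
      (fun p => ?_)
    rw [hPdef]
    simp only [norm_mul]
    refine mul_le_mul (hα_norm p.1) ?_ (mul_nonneg (norm_nonneg _) (norm_nonneg _))
      (norm_nonneg _)
    calc ‖(if (p.2).Coprime (2 * l * p.1) then (1:ℂ) else 0)‖ * ‖(p.2 : ℂ) ^ (-s)‖
        ≤ 1 * ‖(p.2 : ℂ) ^ (-s)‖ := by
          refine mul_le_mul_of_nonneg_right ?_ (norm_nonneg _)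
          split <;> simp
      _ = ‖(p.2 : ℂ) ^ (-s)‖ := one_mul _
  -- Step A : LHS as iterated sum of P
  have hstepA : ∑' k : ℕ, (if Odd k then XF w k * TT s (2 * (l * k)) else 0)
      = ∑' (k : ℕ) (j : ℕ), P (k, j) := by
    refine tsum_congr fun k => ?_
    by_cases hk : Odd k
    · rw [if_pos hk, TT, ← tsum_mul_left]
      refine tsum_congr fun j => ?_
      rw [hPdef]
      simp only [hα, if_pos hk, mul_assoc 2 l k]
    · rw [if_neg hk]
      have : ∀ j : ℕ, P (k, j) = 0 := by
        intro j; rw [hPdef]; simp only [hα, if_neg hk, zero_mul]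
      rw [tsum_congr this, tsum_zero]
  -- Step B : swap the two sums
  have hstepB : ∑' (k : ℕ) (j : ℕ), P (k, j) = ∑' (j : ℕ) (k : ℕ), P (k, j) :=
    (Summable.tsum_comm (f := fun k j => P (k, j)) hP).symm
  -- notation for the convolution
  set A : ℕ → ℂ := eF (2 * l) * XF w * ↗μ with hAdef
  set B : ℕ → ℂ := eF (2 * l) with hBdef
  have hAB : A ⍟ B = eF (2 * l) * ((XF w * ↗μ) ⍟ (1 : ℕ → ℂ)) := by
    have h1 : A = eF (2 * l) * (XF w * ↗μ) := by rw [hAdef, mul_assoc]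
    have h2 : B = eF (2 * l) * (1 : ℕ → ℂ) := (mul_one _).symm
    rw [h1, h2, mul_convolution_distrib _ _ _ (eF_mul (2 * l))]
  have hABj : ∀ j : ℕ, (A ⍟ B) j
      = eF (2 * l) j * ∑ d ∈ j.divisors, XF w d * ((μ d : ℤ) : ℂ) := by
    intro j
    rw [hAB, Pi.mul_apply]
    congr 1
    rw [LSeries.convolution_def]
    dsimp only
    rw [← Nat.map_div_right_divisors, Finset.sum_map]
    simp only [Function.Embedding.coeFn_mk, Pi.mul_apply, Pi.one_apply, mul_one]
    rfl
  -- Step C : inner sum over k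
  have hstepC : ∀ j : ℕ, ∑' k : ℕ, P (k, j)
      = TT (2 * w) 2 * LSeries.term (A ⍟ B) s j := by
    intro j
    rcases Nat.eq_zero_or_pos j with rfl | hj
    · rw [LSeries.term_zero, mul_zero]
      have : ∀ k : ℕ, P (k, 0) = 0 := by
        intro k
        rw [hPdef]
        simp only [Nat.cast_zero, zero_cpow hs0, mul_zero]
      rw [tsum_congr this, tsum_zero]
    · have hj0 : j ≠ 0 := hj.ne'
      rw [LSeries.term_of_ne_zero hj0]
      by_cases hc : j.Coprime (2 * l)
      swap
      · have hz : ∀ k : ℕ, P (k, j) = 0 := by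
          intro k
          rw [hPdef]
          have : ¬ j.Coprime (2 * l * k) := fun h =>
            hc (Nat.coprime_mul_iff_right.mp h).1
          simp [this]
        rw [tsum_congr hz, tsum_zero, hABj j]
        simp only [eF, if_neg hc, zero_mul, zero_div, mul_zero]
      · have hjodd : Odd j := by
          have h2 : (2 : ℕ) ∣ 2 * l := ⟨l, rfl⟩
          exact Nat.coprime_two_right.mp (Nat.Coprime.coprime_dvd_right h2 hc)
      -- rewrite the coprimality condition
        have hPkj : ∀ k : ℕ, P (k, j)
            = (α k * (if j.Coprime k then 1 else 0)) * (j : ℂ) ^ (-s) := by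
          intro k
          rw [hPdef]
          have : j.Coprime (2 * l * k) ↔ j.Coprime k := by
            rw [Nat.coprime_mul_iff_right]
            exact ⟨fun h => h.2, fun h => ⟨hc, h⟩⟩
          simp only [this]
          ring
        rw [tsum_congr hPkj, tsum_mul_right]
        -- now compute G := ∑' k, α k * (if j.Coprime k then 1 else 0)
        have hGsummand : ∀ k : ℕ, α k * (if j.Coprime k then (1:ℂ) else 0)
            = ∑ d ∈ j.divisors, α k * (if d ∣ k then ((μ d : ℤ) : ℂ) else 0) := by
          intro k
          rw [← Finset.mul_sum, moebius_divisor_sum j k hj0]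
        have hinner_summable : ∀ d : ℕ,
            Summable (fun k : ℕ => α k * (if d ∣ k then ((μ d : ℤ) : ℂ) else 0)) := by
          intro d
          refine Summable.of_norm_bounded
            hu (fun k => ?_)
          rw [norm_mul]
          calc ‖α k‖ * ‖(if d ∣ k then ((μ d : ℤ) : ℂ) else 0)‖
              ≤ ‖(k : ℂ) ^ (-(2 * w))‖ * 1 := by
                refine mul_le_mul (hα_norm k) ?_ (norm_nonneg _) (norm_nonneg _)
                split
                · exact norm_mu_le d
                · simp
            _ = ‖(k : ℂ) ^ (-(2 * w))‖ := mul_one _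
        have hG : ∑' k : ℕ, α k * (if j.Coprime k then (1:ℂ) else 0)
            = (∑ d ∈ j.divisors, XF w d * ((μ d : ℤ) : ℂ)) * TT (2 * w) 2 := by
          rw [tsum_congr hGsummand, Summable.tsum_finsetSum (fun d _ => hinner_summable d)]
          rw [Finset.sum_mul]
          refine Finset.sum_congr rfl fun d hd => ?_
          obtain ⟨hdj, _⟩ := Nat.mem_divisors.mp hd
          have hd0 : d ≠ 0 := by
            rintro rfl
            exact hj0 (Nat.eq_zero_of_zero_dvd hdj)
          have hdodd : Odd d :=
            Nat.coprime_two_right.mp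
              (Nat.Coprime.coprime_dvd_left hdj (Nat.coprime_two_right.mpr hjodd))
          -- reindex k = d * i
          have hginj : Function.Injective (fun i : ℕ => d * i) :=
            mul_right_injective₀ hd0
          rw [← Function.Injective.tsum_eq hginj
            (f := fun k => α k * (if d ∣ k then ((μ d : ℤ) : ℂ) else 0)) ?_]
          · have hterm : ∀ i : ℕ,
                α (d * i) * (if d ∣ d * i then ((μ d : ℤ) : ℂ) else 0)
                = (XF w d * ((μ d : ℤ) : ℂ)) * α i := by
              intro i
              rw [if_pos (dvd_mul_right d i)]
              simp only [hα]
              by_cases hi : Odd i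
              · rw [if_pos hi, if_pos (Nat.odd_mul.mpr ⟨hdodd, hi⟩), XF_mul]
                ring
              · rw [if_neg hi, if_neg (fun h => hi (Nat.odd_mul.mp h).2)]
                ring
            rw [tsum_congr hterm, tsum_mul_left]
            congr 1
            rw [TT]
            refine tsum_congr fun i => ?_
            simp only [hα]
            by_cases hi : Odd i
            · rw [if_pos hi, if_pos (Nat.coprime_two_right.mpr hi), one_mul]
              simp only [XF]
            · rw [if_neg hi, if_neg (fun h => hi (Nat.coprime_two_right.mp h)), zero_mul]
          · intro x hx
            rcases em (d ∣ x) with hdx | hdx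
            · obtain ⟨i, rfl⟩ := hdx
              exact ⟨i, rfl⟩
            · exfalso
              apply hx
              simp [hdx]
        rw [hG, hABj j]
        simp only [eF, if_pos hc, one_mul]
        rw [cpow_neg, div_eq_mul_inv]
        ring
  rw [hstepA, hstepB, tsum_congr hstepC, tsum_mul_left]
  rfl


lemma TT_shift (z w : ℂ) (N : ℕ) (hN : N ≠ 1) (hzw : -(2 * w + z) ≠ 0) :
    TT (2 * w + z) N = LSeries (eF N * XF w) z := by
  refine tsum_congr fun n => ?_
  rcases Nat.eq_zero_or_pos n with rfl | hn
  · rw [LSeries.term_zero, Nat.cast_zero, zero_cpow hzw, mul_zero]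
  · rw [LSeries.term_of_ne_zero hn.ne']
    have hn0 : (n : ℂ) ≠ 0 := Nat.cast_ne_zero.mpr hn.ne'
    rw [Pi.mul_apply, show -(2 * w + z) = -(2 * w) + -z by ring, cpow_add _ _ hn0,
      div_eq_mul_inv, ← cpow_neg]
    simp only [eF, XF]
    ring

end SquareTermsAux

set_option maxHeartbeats 1000000 in
open SquareTermsAux ArithmeticFunction in
/-- **The square-term contribution.**
Let `l > 0` be odd and squarefree.  For `Re s > 1` and `Re w > 1/2`, the series
`∑_{m odd, ml = □} χ^{(8)}(ml) L^{(2)}(s,χ_{ml}) m^{-w}` converges absolutely and equals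
`ζ^{(2)}(2w) L^{(2)}(s,χ_{l²}) / (l^w L^{(2)}(2w+s,χ_{l²}))`. -/
theorem squareTerms_eq
    (l : ℕ) (hl_odd : Odd l) (hl_sqf : Squarefree l)
    (s w : ℂ) (hs : 1 < s.re) (hw : 1 / 2 < w.re) :
    Summable (fun m : ℕ =>
      ‖if Odd m ∧ IsSquare (m * l) then
          (jacobiSym 8 (m * l) : ℂ) * L2Jacobi s (m * l) * (m : ℂ) ^ (-w)
        else 0‖)
    ∧ (∑' m : ℕ, if Odd m ∧ IsSquare (m * l) then
          (jacobiSym 8 (m * l) : ℂ) * L2Jacobi s (m * l) * (m : ℂ) ^ (-w)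
        else 0)
      = zetaE 2 (2 * w) * L2Jacobi s (l ^ 2)
          / ((l : ℂ) ^ w * L2Jacobi (2 * w + s) (l ^ 2)) := by
  classical
  have hl0 : l ≠ 0 := hl_sqf.ne_zero
  have hl0' : (l : ℂ) ≠ 0 := Nat.cast_ne_zero.mpr hl0
  have hw0 : 0 ≤ w.re := by linarith
  have h2w : 1 < (2 * w).re := by
    simp only [Complex.mul_re, Complex.re_ofNat, Complex.im_ofNat, zero_mul, sub_zero]
    linarith
  have h2ws0 : -(2 * w + s) ≠ 0 := by
    intro h
    rw [neg_eq_zero] at h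
    have := congrArg Complex.re h
    simp only [Complex.add_re, Complex.mul_re, Complex.re_ofNat, Complex.im_ofNat,
      zero_mul, sub_zero, Complex.zero_re] at this
    linarith
  have h2l1 : 2 * l ≠ 1 := by omega
  set fm : ℕ → ℂ := fun m => if Odd m ∧ IsSquare (m * l) then
      (jacobiSym 8 (m * l) : ℂ) * L2Jacobi s (m * l) * (m : ℂ) ^ (-w) else 0 with hfm
  -- term computation along the injection k ↦ l * k ^ 2
  have hcomp : ∀ k : ℕ, fm (l * k ^ 2)
      = if Odd k then TT s (2 * (l * k)) * ((l : ℂ) ^ (-w) * XF w k) else 0 := by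
    intro k
    by_cases hk : Odd k
    · have hk0 : k ≠ 0 := by rintro rfl; simp at hk
      have hmodd : Odd (l * k ^ 2) := hl_odd.mul (hk.pow)
      have hiss : IsSquare ((l * k ^ 2) * l) := ⟨l * k, by ring⟩
      have hsq : (l * k ^ 2) * l = (l * k) ^ 2 := by ring
      have hlk_odd : Odd (l * k) := hl_odd.mul hk
      have hlk0 : l * k ≠ 0 := by positivity
      rw [hfm]
      simp only []
      rw [if_pos ⟨hmodd, hiss⟩, if_pos hk, hsq]
      have hj8 : (jacobiSym 8 ((l * k) ^ 2) : ℂ) = 1 := by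
        have hg : Int.gcd 8 ((l * k : ℕ) : ℤ) = 1 := by
          have : ¬ (2 : ℕ) ∣ l * k := by
            intro h2
            exact (Nat.not_even_iff_odd.mpr hlk_odd) (even_iff_two_dvd.mpr h2)
          have hcop : Nat.Coprime 8 (l * k) := by
            have h2 : Nat.Coprime 2 (l * k) := (Nat.coprime_two_left).mpr hlk_odd
            calc Nat.gcd 8 (l * k) = Nat.gcd (2 ^ 3) (l * k) := by norm_num
              _ = 1 := Nat.Coprime.pow_left 3 h2
          exact_mod_cast hcop
        rw [sq, jacobiSym.mul_right' _ hlk0 hlk0]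
        rcases jacobiSym.eq_one_or_neg_one hg with h | h <;> rw [h] <;> norm_num
      rw [hj8, one_mul, L2Jacobi_sq s (l * k) hlk_odd]
      have hcp : ((l * k ^ 2 : ℕ) : ℂ) ^ (-w) = (l : ℂ) ^ (-w) * XF w k := by
        have h1 : ((l * k ^ 2 : ℕ) : ℂ) = ((l : ℕ) : ℂ) * ((k ^ 2 : ℕ) : ℂ) := by
          push_cast; ring
        have hk0' : (k : ℂ) ≠ 0 := Nat.cast_ne_zero.mpr hk0
        have h2 : ((k ^ 2 : ℕ) : ℂ) ^ (-w) = (k : ℂ) ^ (-(2 * w)) := by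
          rw [show ((k ^ 2 : ℕ) : ℂ) = ((k : ℕ) : ℂ) * ((k : ℕ) : ℂ) by push_cast; ring,
            natCast_mul_natCast_cpow, ← cpow_add _ _ hk0']
          congr 1
          ring
        rw [h1, natCast_mul_natCast_cpow, h2, XF]
      rw [hcp]
    · have hnodd : ¬ Odd (l * k ^ 2) := by
        intro h
        have hk2 : Odd (k ^ 2) := (Nat.odd_mul.mp h).2
        rcases Nat.even_or_odd k with he | ho
        · rw [sq] at hk2
          exact (Nat.not_even_iff_odd.mpr hk2) (he.mul_right k)
        · exact hk ho
      rw [hfm]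
      simp only []
      rw [if_neg (fun hcond => hnodd hcond.1), if_neg hk]
  have hinj : Function.Injective (fun k : ℕ => l * k ^ 2) := by
    intro a b h
    simp only [] at h
    have h2 : a ^ 2 = b ^ 2 := mul_left_cancel₀ hl0 h
    exact Nat.pow_left_injective (by norm_num) h2
  have hsupp : ∀ m ∉ Set.range (fun k : ℕ => l * k ^ 2), fm m = 0 := by
    intro m hm
    rw [hfm]
    simp only []
    rw [if_neg ?_]
    rintro ⟨hmodd, r, hr⟩
    have hlr : l ∣ r := by
      have : l ∣ r ^ 2 := ⟨m, by rw [sq, ← hr]; ring⟩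
      exact (hl_sqf.dvd_pow_iff_dvd two_ne_zero).mp this
    obtain ⟨t, rfl⟩ := hlr
    have hmt : m = l * t ^ 2 := by
      have h1 : m * l = (l * t ^ 2) * l := by rw [hr]; ring
      exact Nat.eq_of_mul_eq_mul_right (Nat.pos_of_ne_zero hl0) h1
    exact hm ⟨t, hmt.symm⟩
  -- summability
  have hC : ∀ N : ℕ, ‖TT s N‖ ≤ ∑' n : ℕ, ‖(n : ℂ) ^ (-s)‖ := fun N => norm_TT_le s N hs
  have hφsum : Summable (fun k : ℕ => ‖fm (l * k ^ 2)‖) := by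
    refine Summable.of_nonneg_of_le (fun k => norm_nonneg _) (fun k => ?_)
      (((summable_norm_cpow h2w).mul_left
        ((∑' n : ℕ, ‖(n : ℂ) ^ (-s)‖) * ‖(l : ℂ) ^ (-w)‖)))
    rw [hcomp k]
    by_cases hk : Odd k
    · rw [if_pos hk]
      rw [norm_mul, norm_mul]
      have h1 : ‖XF w k‖ = ‖(k : ℂ) ^ (-(2 * w))‖ := rfl
      calc ‖TT s (2 * (l * k))‖ * (‖(l : ℂ) ^ (-w)‖ * ‖XF w k‖)
          ≤ (∑' n : ℕ, ‖(n : ℂ) ^ (-s)‖) * (‖(l : ℂ) ^ (-w)‖ * ‖(k : ℂ) ^ (-(2 * w))‖) := by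
            rw [h1]
            exact mul_le_mul_of_nonneg_right (hC _)
              (mul_nonneg (norm_nonneg _) (norm_nonneg _))
        _ = (∑' n : ℕ, ‖(n : ℂ) ^ (-s)‖) * ‖(l : ℂ) ^ (-w)‖ * ‖(k : ℂ) ^ (-(2 * w))‖ := by ring
    · rw [if_neg hk, norm_zero]
      exact mul_nonneg (mul_nonneg (tsum_nonneg fun n => norm_nonneg _) (norm_nonneg _))
        (norm_nonneg _)
  have hnormsupp : ∀ m ∉ Set.range (fun k : ℕ => l * k ^ 2), ‖fm m‖ = 0 := by
    intro m hm
    rw [hsupp m hm, norm_zero]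
  constructor
  · exact (Function.Injective.summable_iff hinj hnormsupp).mp hφsum
  · -- the tsum computation
    have htsum1 : (∑' m : ℕ, fm m) = ∑' k : ℕ, fm (l * k ^ 2) :=
      (Function.Injective.tsum_eq hinj (Function.support_subset_iff'.mpr hsupp)).symm
    have htsum2 : (∑' k : ℕ, fm (l * k ^ 2))
        = (l : ℂ) ^ (-w) * ∑' k : ℕ, (if Odd k then XF w k * TT s (2 * (l * k)) else 0) := by
      rw [← tsum_mul_left]
      refine tsum_congr fun k => ?_
      rw [hcomp k]
      by_cases hk : Odd k
      · rw [if_pos hk, if_pos hk]; ring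
      · rw [if_neg hk, if_neg hk, mul_zero]
    have hkey := key_sum l hl_odd hl0 hs hw
    have hconv : LSeries ((eF (2 * l) * XF w * ↗μ) ⍟ eF (2 * l)) s
        = LSeries (eF (2 * l) * XF w * ↗μ) s * LSeries (eF (2 * l)) s :=
      LSeries_convolution' (LSummable_A hs hw0 (2 * l)) (LSummable_B hs (2 * l))
    have hinv := LSeries_inverse hs hw0 (2 * l)
    have hzeta : zetaE 2 (2 * w) = TT (2 * w) 2 := zetaE_two_eq_TT (2 * w) h2w
    have hLB : L2Jacobi s (l ^ 2) = LSeries (eF (2 * l)) s := by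
      rw [L2Jacobi_sq s l hl_odd]
      exact TT_eq_LSeries s (2 * l) h2l1
    have hLg : L2Jacobi (2 * w + s) (l ^ 2) = LSeries (eF (2 * l) * XF w) s := by
      rw [L2Jacobi_sq (2 * w + s) l hl_odd]
      exact TT_shift s w (2 * l) h2l1 h2ws0
    have hlw : (l : ℂ) ^ w ≠ 0 := by
      rw [Complex.cpow_def_of_ne_zero hl0']
      exact Complex.exp_ne_zero _
    have hg0 : LSeries (eF (2 * l) * XF w) s ≠ 0 := left_ne_zero_of_mul_eq_one hinv
    rw [show (∑' m : ℕ, if Odd m ∧ IsSquare (m * l) then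
          (jacobiSym 8 (m * l) : ℂ) * L2Jacobi s (m * l) * (m : ℂ) ^ (-w)
        else 0) = ∑' m : ℕ, fm m from rfl]
    rw [htsum1, htsum2, hkey, hconv, hzeta, hLB, hLg]
    set T2 := TT (2 * w) 2
    set LA := LSeries (eF (2 * l) * XF w * ↗μ) s
    set LB := LSeries (eF (2 * l)) s
    set Lg := LSeries (eF (2 * l) * XF w) s
    rw [cpow_neg, eq_div_iff (mul_ne_zero hlw hg0)]
    have hexp : ((l : ℂ) ^ w)⁻¹ * ((l : ℂ) ^ w) = 1 := inv_mul_cancel₀ hlw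
    calc ((l : ℂ) ^ w)⁻¹ * (T2 * (LA * LB)) * ((l : ℂ) ^ w * Lg)
        = (((l : ℂ) ^ w)⁻¹ * ((l : ℂ) ^ w)) * (T2 * LB) * (Lg * LA) := by ring
      _ = T2 * LB := by rw [hexp, hinv, one_mul, mul_one]
end
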